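/- Let X and Y be two games (transition systems with payoffs) that are related by a bisimulation R such that whenever (x, y) ∈ R, every move from x can be matched by a move from y to an R-related pair and vice versa, respecting player ownership, and such that the payoffs of any two R-related maximal plays differ by at most α. Then for any (x, y) ∈ R, |Val_X(x) - Val_Y(y)| ≤ α. -/

import Mathlib

open Classical

/-- The history of the play from `s` when Min plays `σ` (at Min states) and Max
plays `τ` (elsewhere), each strategy mapping the history to the next state. -/
noncomputable def histList {S : Type*} (MinV : Set S) (σ τ : List S → S) (s : S) :
    ℕ → List S
  | 0 => [s]
  | n + 1 =>
      let h := histList MinV σ τ s n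
      h ++ [if h.getLastD s ∈ MinV then σ h else τ h]

/-- The state visited at step `n` of the play. -/
noncomputable def playSeq {S : Type*} (MinV : Set S) (σ τ : List S → S) (s : S)
    (n : ℕ) : S :=
  (histList MinV σ τ s n).getLastD s

/-- A strategy is valid if it always proposes a legal move. -/
def ValidStrat {S : Type*} (M : S → S → Prop) (σ : List S → S) : Prop :=
  ∀ (l : List S) (x : S), l.getLast? = some x → M x (σ l)

/-- The (inf-sup) value of a game with move relation `M`, Min states `MinV`, and
payoff `P` on (maximal) plays. -/
noncomputable def gameVal {S : Type*} (M : S → S → Prop) (MinV : Set S)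
    (P : (ℕ → S) → EReal) (s : S) : EReal :=
  ⨅ σ : {σ : List S → S // ValidStrat M σ},
    ⨆ τ : {τ : List S → S // ValidStrat M τ},
      P (playSeq MinV σ.1 τ.1 s)

/-- The sup-inf value of the game. -/
noncomputable def gameValSupInf {S : Type*} (M : S → S → Prop) (MinV : Set S)
    (P : (ℕ → S) → EReal) (s : S) : EReal :=
  ⨆ τ : {τ : List S → S // ValidStrat M τ},
    ⨅ σ : {σ : List S → S // ValidStrat M σ},
      P (playSeq MinV σ.1 τ.1 s)

private lemma getLast?_eq_some_getLastD {α : Type*} (l : List α) (d : α) (h : l ≠ []) :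
    l.getLast? = some (l.getLastD d) := by
  rw [List.getLastD_eq_getLast?]
  cases hl : l.getLast? with
  | none => exact absurd (List.getLast?_eq_none_iff.1 hl) h
  | some a => rfl

private lemma ereal_iInf_add {ι : Sort*} (f : ι → EReal) (c : ℝ) :
    (⨅ i, f i) + (c : EReal) = ⨅ i, (f i + (c : EReal)) := by
  apply le_antisymm
  · exact le_iInf fun i => add_le_add_left (iInf_le f i) _
  · cases isEmpty_or_nonempty ι with
    | inl h => simp [iInf_of_empty, EReal.top_add_coe]
    | inr h =>
      rw [← EReal.sub_le_iff_le_add (by simp) (by simp)]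
      exact le_iInf fun i => (EReal.sub_le_iff_le_add (by simp) (by simp)).2
        (iInf_le (fun i => f i + (c : EReal)) i)

/-- One step of the joint play: Max plays `τx` on the `X` side, Min plays `σy`
on the `Y` side, and the other side copies through the bisimulation. -/
noncomputable def pairStep {X Y : Type*} (Mx : X → X → Prop) (MinX : Set X)
    (My : Y → Y → Prop) (R : X → Y → Prop)
    (τx : List X → X) (σy : List Y → Y) (x : X) (y : Y)
    (h : List X × List Y) : List X × List Y :=
  haveI : Nonempty X := ⟨x⟩
  haveI : Nonempty Y := ⟨y⟩
  if h.1.getLastD x ∈ MinX then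
    (h.1 ++ [Classical.epsilon fun a' => Mx (h.1.getLastD x) a' ∧ R a' (σy h.2)],
     h.2 ++ [σy h.2])
  else
    (h.1 ++ [τx h.1],
     h.2 ++ [Classical.epsilon fun b' => My (h.2.getLastD y) b' ∧ R (τx h.1) b'])

/-- The joint history after `n` steps. -/
noncomputable def pairHist {X Y : Type*} (Mx : X → X → Prop) (MinX : Set X)
    (My : Y → Y → Prop) (R : X → Y → Prop)
    (τx : List X → X) (σy : List Y → Y) (x : X) (y : Y) : ℕ → List X × List Y
  | 0 => ([x], [y])
  | n + 1 => pairStep Mx MinX My R τx σy x y (pairHist Mx MinX My R τx σy x y n)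

private theorem oneSide {X Y : Type*}
    (Mx : X → X → Prop) (MinX : Set X) (Px : (ℕ → X) → EReal)
    (My : Y → Y → Prop) (MinY : Set Y) (Py : (ℕ → Y) → EReal)
    (R : X → Y → Prop) (α : ℝ)
    (hmatch : ∀ x y, R x y →
      (x ∈ MinX ↔ y ∈ MinY) ∧
      (∀ x', Mx x x' → ∃ y', My y y' ∧ R x' y') ∧
      (∀ y', My y y' → ∃ x', Mx x x' ∧ R x' y'))
    (hpay : ∀ (p : ℕ → X) (q : ℕ → Y),
      (∀ i, Mx (p i) (p (i + 1))) → (∀ i, My (q i) (q (i + 1))) →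
      (∀ i, R (p i) (q i)) →
      Px p ≤ Py q + (α : EReal)) :
    ∀ x y, R x y →
      gameValSupInf Mx MinX Px x ≤ gameVal My MinY Py y + (α : EReal) := by
  intro x y hR
  haveI : Nonempty X := ⟨x⟩
  haveI : Nonempty Y := ⟨y⟩
  cases isEmpty_or_nonempty {σ : List X → X // ValidStrat Mx σ} with
  | inl hX => rw [gameValSupInf, iSup_of_empty]; exact bot_le
  | inr hX =>
  cases isEmpty_or_nonempty {σ : List Y → Y // ValidStrat My σ} with
  | inl hY =>
      rw [gameVal, iInf_of_empty, EReal.top_add_coe]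
      exact le_top
  | inr hY =>
  obtain ⟨fbX⟩ := hX
  obtain ⟨fbY⟩ := hY
  rw [gameValSupInf]
  apply iSup_le
  rintro ⟨τx, hτx⟩
  rw [gameVal, ereal_iInf_add]
  apply le_iInf
  rintro ⟨σy, hσy⟩
  -- the joint play
  set H : ℕ → List X × List Y := pairHist Mx MinX My R τx σy x y with hH
  set p : ℕ → X := fun n => (H n).1.getLastD x with hp
  set q : ℕ → Y := fun n => (H n).2.getLastD y with hq
  have hH0 : H 0 = ([x], [y]) := rfl
  have hHs : ∀ n, H (n + 1) = pairStep Mx MinX My R τx σy x y (H n) := fun n => rfl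
  have hlen : ∀ n, (H n).1.length = n + 1 ∧ (H n).2.length = n + 1 := by
    intro n
    induction n with
    | zero => simp [hH0]
    | succ n ih =>
        rw [hHs n, pairStep]
        split_ifs <;> simp [ih.1, ih.2]
  have hne1 : ∀ n, (H n).1 ≠ [] := fun n => by
    have := (hlen n).1; intro h; simp [h] at this
  have hne2 : ∀ n, (H n).2 ≠ [] := fun n => by
    have := (hlen n).2; intro h; simp [h] at this
  -- one step of the invariant
  have step : ∀ n, R (p n) (q n) →
      (Mx (p n) (p (n + 1)) ∧ My (q n) (q (n + 1)) ∧ R (p (n + 1)) (q (n + 1))) ∧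
      (H (n + 1)).1 = (H n).1 ++ [p (n + 1)] ∧
      (H (n + 1)).2 = (H n).2 ++ [q (n + 1)] ∧
      (if p n ∈ MinX then q (n + 1) = σy (H n).2 else p (n + 1) = τx (H n).1) := by
    intro n hRn
    by_cases hmem : p n ∈ MinX
    · have hstep : H (n + 1) =
          ((H n).1 ++ [Classical.epsilon fun a' => Mx (p n) a' ∧ R a' (σy (H n).2)],
           (H n).2 ++ [σy (H n).2]) := by
        rw [hHs n, pairStep, if_pos hmem]
      have hmove : My (q n) (σy (H n).2) :=
        hσy _ _ (getLast?_eq_some_getLastD _ y (hne2 n))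
      obtain ⟨a', ha1, ha2⟩ := (hmatch _ _ hRn).2.2 _ hmove
      have hspec : (fun a' => Mx (p n) a' ∧ R a' (σy (H n).2))
          (Classical.epsilon fun a' => Mx (p n) a' ∧ R a' (σy (H n).2)) :=
        @Classical.epsilon_spec _ (fun a' => Mx (p n) a' ∧ R a' (σy (H n).2)) ⟨a', ha1, ha2⟩
      have hp1 : p (n + 1) = Classical.epsilon fun a' => Mx (p n) a' ∧ R a' (σy (H n).2) := by
        rw [hp]; simp only [hstep, List.getLastD_concat]; rfl
      have hq1 : q (n + 1) = σy (H n).2 := by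
        rw [hq]; simp only [hstep, List.getLastD_concat]
      refine ⟨⟨hp1 ▸ hspec.1, hq1 ▸ hmove, ?_⟩, by rw [hstep, hp1], by rw [hstep, hq1],
        by rw [if_pos hmem]; exact hq1⟩
      rw [hp1, hq1]; exact hspec.2
    · have hstep : H (n + 1) =
          ((H n).1 ++ [τx (H n).1],
           (H n).2 ++ [Classical.epsilon fun b' => My (q n) b' ∧ R (τx (H n).1) b']) := by
        rw [hHs n, pairStep, if_neg hmem]
      have hmove : Mx (p n) (τx (H n).1) :=
        hτx _ _ (getLast?_eq_some_getLastD _ x (hne1 n))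
      obtain ⟨b', hb1, hb2⟩ := (hmatch _ _ hRn).2.1 _ hmove
      have hspec : (fun b' => My (q n) b' ∧ R (τx (H n).1) b')
          (Classical.epsilon fun b' => My (q n) b' ∧ R (τx (H n).1) b') :=
        @Classical.epsilon_spec _ (fun b' => My (q n) b' ∧ R (τx (H n).1) b') ⟨b', hb1, hb2⟩
      have hp1 : p (n + 1) = τx (H n).1 := by
        rw [hp]; simp only [hstep, List.getLastD_concat]
      have hq1 : q (n + 1) = Classical.epsilon fun b' => My (q n) b' ∧ R (τx (H n).1) b' := by
        rw [hq]; simp only [hstep, List.getLastD_concat]; rfl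
      refine ⟨⟨hp1 ▸ hmove, hq1 ▸ hspec.1, ?_⟩, by rw [hstep, hp1], by rw [hstep, hq1],
        by rw [if_neg hmem]; exact hp1⟩
      rw [hp1, hq1]; exact hspec.2
  have hR0 : R (p 0) (q 0) := by
    have : p 0 = x := by rw [hp]; simp [hH0]
    have h2 : q 0 = y := by rw [hq]; simp [hH0]
    rw [this, h2]; exact hR
  have inv : ∀ n, R (p n) (q n) := by
    intro n
    induction n with
    | zero => exact hR0
    | succ n ih => exact ((step n ih).1).2.2
  have hMx : ∀ n, Mx (p n) (p (n + 1)) := fun n => ((step n (inv n)).1).1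
  have hMy : ∀ n, My (q n) (q (n + 1)) := fun n => ((step n (inv n)).1).2.1
  -- the derived strategies
  set σx : List X → X := fun l => if l = (H (l.length - 1)).1 then p l.length else fbX.1 l
    with hσx
  set τy : List Y → Y := fun l => if l = (H (l.length - 1)).2 then q l.length else fbY.1 l
    with hτy
  have hvσx : ValidStrat Mx σx := by
    intro l z hz
    rw [hσx]
    by_cases hl : l = (H (l.length - 1)).1
    · simp only [if_pos hl]
      have hlenl : l.length = (l.length - 1) + 1 := by
        rw [hl, (hlen (l.length - 1)).1]; omega
      have hzz : z = p (l.length - 1) := by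
        have := getLast?_eq_some_getLastD (H (l.length - 1)).1 x (hne1 _)
        rw [hl] at hz
        rw [hz] at this
        exact (Option.some_injective _ this)
      have h1 := hMx (l.length - 1)
      rw [← hlenl] at h1
      rwa [hzz]
    · simp only [if_neg hl]
      exact fbX.2 l z hz
  have hvτy : ValidStrat My τy := by
    intro l z hz
    rw [hτy]
    by_cases hl : l = (H (l.length - 1)).2
    · simp only [if_pos hl]
      have hlenl : l.length = (l.length - 1) + 1 := by
        rw [hl, (hlen (l.length - 1)).2]; omega
      have hzz : z = q (l.length - 1) := by
        have := getLast?_eq_some_getLastD (H (l.length - 1)).2 y (hne2 _)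
        rw [hl] at hz
        rw [hz] at this
        exact (Option.some_injective _ this)
      have h1 := hMy (l.length - 1)
      rw [← hlenl] at h1
      rwa [hzz]
    · simp only [if_neg hl]
      exact fbY.2 l z hz
  -- the histories of the derived strategies reproduce the joint play
  have hhist : ∀ n, histList MinX σx τx x n = (H n).1 ∧
      histList MinY σy τy y n = (H n).2 := by
    intro n
    induction n with
    | zero => constructor <;> rfl
    | succ n ih =>
        obtain ⟨_, hs1, hs2, hs3⟩ := step n (inv n)
        constructor
        · show histList MinX σx τx x n ++ _ = _
          rw [ih.1, hs1]
          congr 1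
          by_cases hmem : p n ∈ MinX
          · rw [if_pos (show (H n).1.getLastD x ∈ MinX from hmem)]
            simp [hσx, (hlen n).1]
          · rw [if_neg (show (H n).1.getLastD x ∉ MinX from hmem)]
            rw [if_neg hmem] at hs3
            rw [hs3]
        · show histList MinY σy τy y n ++ _ = _
          rw [ih.2, hs2]
          congr 1
          have hmemiff : p n ∈ MinX ↔ q n ∈ MinY := (hmatch _ _ (inv n)).1
          by_cases hmem : p n ∈ MinX
          · rw [if_pos (show (H n).2.getLastD y ∈ MinY from hmemiff.1 hmem)]
            rw [if_pos hmem] at hs3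
            rw [hs3]
          · rw [if_neg (show (H n).2.getLastD y ∉ MinY from fun h => hmem (hmemiff.2 h))]
            simp [hτy, (hlen n).2]
    -- done
  have hplayX : playSeq MinX σx τx x = p := by
    funext n; rw [playSeq, (hhist n).1]
  have hplayY : playSeq MinY σy τy y = q := by
    funext n; rw [playSeq, (hhist n).2]
  calc ⨅ σ : {σ : List X → X // ValidStrat Mx σ}, Px (playSeq MinX σ.1 τx x)
      ≤ Px (playSeq MinX σx τx x) :=
        iInf_le (fun σ : {σ : List X → X // ValidStrat Mx σ} =>
          Px (playSeq MinX σ.1 τx x)) ⟨σx, hvσx⟩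
    _ = Px p := by rw [hplayX]
    _ ≤ Py q + (α : EReal) := hpay p q hMx hMy inv
    _ = Py (playSeq MinY σy τy y) + (α : EReal) := by rw [hplayY]
    _ ≤ (⨆ τ : {τ : List Y → Y // ValidStrat My τ}, Py (playSeq MinY σy τ.1 y))
          + (α : EReal) := by
        apply add_le_add_left
        exact le_iSup (fun τ : {τ : List Y → Y // ValidStrat My τ} =>
          Py (playSeq MinY σy τ.1 y)) ⟨τy, hvτy⟩

/-- If two determined games are related by a bisimulation `R` matching moves and
respecting player ownership, such that the payoffs of any two `R`-related maximal
plays differ by at most `α`, then the values of `R`-related states differ by at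
most `α`. -/
theorem stmt16 {X Y : Type*}
    (Mx : X → X → Prop) (MinX : Set X) (Px : (ℕ → X) → EReal)
    (My : Y → Y → Prop) (MinY : Set Y) (Py : (ℕ → Y) → EReal)
    (R : X → Y → Prop) (α : ℝ) (hα : 0 ≤ α)
    (hmatch : ∀ x y, R x y →
      (x ∈ MinX ↔ y ∈ MinY) ∧
      (∀ x', Mx x x' → ∃ y', My y y' ∧ R x' y') ∧
      (∀ y', My y y' → ∃ x', Mx x x' ∧ R x' y'))
    (hpay : ∀ (p : ℕ → X) (q : ℕ → Y),
      (∀ i, Mx (p i) (p (i + 1))) → (∀ i, My (q i) (q (i + 1))) →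
      (∀ i, R (p i) (q i)) →
      Px p ≤ Py q + (α : EReal) ∧ Py q ≤ Px p + (α : EReal))
    (hdetX : ∀ x, gameVal Mx MinX Px x = gameValSupInf Mx MinX Px x)
    (hdetY : ∀ y, gameVal My MinY Py y = gameValSupInf My MinY Py y) :
    ∀ x y, R x y →
      gameVal Mx MinX Px x ≤ gameVal My MinY Py y + (α : EReal) ∧
      gameVal My MinY Py y ≤ gameVal Mx MinX Px x + (α : EReal) := by
  intro x y hR
  constructor
  · rw [hdetX]
    exact oneSide Mx MinX Px My MinY Py R α hmatch
      (fun p q h1 h2 h3 => (hpay p q h1 h2 h3).1) x y hR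
  · rw [hdetY]
    exact oneSide My MinY Py Mx MinX Px (fun b a => R a b) α
      (fun b a hab => ⟨(hmatch a b hab).1.symm,
        (fun y' hy' => (hmatch a b hab).2.2 y' hy'),
        (fun x' hx' => (hmatch a b hab).2.1 x' hx')⟩)
      (fun q p h2 h1 h3 => (hpay p q h1 h2 h3).2) y x hR
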